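/- (Recovery guarantee for ZD-GroTh, Proposition 1) Let y = Σ_{j∈U} A_j x_j + n with nonempty sets U of used blocks and N of unused blocks, blocks A_i of full column rank satisfying ‖(A_i^H A_i)^{-1/2} A_i^H‖_2 ≤ 1, block mutual coherence μ_B > 0, σ_min = min_i σ_min(A_i), and ‖x_min‖_2 = min_{j∈U} ‖x_j‖_2 > 0. If (Σ_{j∈U} ‖x_j‖_2)/‖x_min‖_2 < (1/2)(σ_min/μ_B + 1) − ‖n‖_2/(μ_B ‖x_min‖_2), then min_{i∈N} ‖(A_i^H A_i)^{-1/2} A_i^H y‖_2 < min_{j∈U} ‖(A_j^H A_j)^{-1/2} A_j^H y‖_2; consequently any index achieving the global minimum of the correlation ‖(A_i^H A_i)^{-1/2} A_i^H y‖_2 over i ∈ {1,...,B} belongs to N, i.e., ZD-GroTh identifies an unused block. -/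

import Mathlib

open Matrix Finset
open scoped ComplexOrder

noncomputable section
open scoped Classical

def enorm2 {n : ℕ} (v : Fin n → ℂ) : ℝ := ‖(WithLp.equiv 2 (Fin n → ℂ)).symm v‖

def snorm {m n : ℕ} (A : Matrix (Fin m) (Fin n) ℂ) : ℝ :=
  ‖LinearMap.toContinuousLinearMap (Matrix.toEuclideanLin A)‖

/-- The positive semidefinite square root of a positive semidefinite matrix
(the former `Matrix.PosSemidef.sqrt`, spelled out). -/
def psdSqrt {n : ℕ} {M : Matrix (Fin n) (Fin n) ℂ} (hA : M.PosSemidef) :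
    Matrix (Fin n) (Fin n) ℂ :=
  hA.1.eigenvectorUnitary.1 * diagonal ((↑) ∘ (√·) ∘ hA.1.eigenvalues) *
  (star hA.1.eigenvectorUnitary : Matrix (Fin n) (Fin n) ℂ)

def invSqrt {n : ℕ} (M : Matrix (Fin n) (Fin n) ℂ) : Matrix (Fin n) (Fin n) ℂ :=
  if h : M.PosSemidef then (psdSqrt h)⁻¹ else 0

def msqrt {n : ℕ} (M : Matrix (Fin n) (Fin n) ℂ) : Matrix (Fin n) (Fin n) ℂ :=
  if h : M.PosSemidef then psdSqrt h else 0

/-- normalized correlation ‖(AᴴA)^{-1/2} Aᴴ r‖₂ -/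
def ncorr {m k : ℕ} (A : Matrix (Fin m) (Fin k) ℂ) (r : Fin m → ℂ) : ℝ :=
  enorm2 ((invSqrt (Aᴴ * A) * Aᴴ).mulVec r)

end

section AuxLemmas

lemma psdSqrt_mul_self {n : ℕ} {M : Matrix (Fin n) (Fin n) ℂ} (h : M.PosSemidef) :
    psdSqrt h * psdSqrt h = M := by
  have hU : (star h.1.eigenvectorUnitary : Matrix (Fin n) (Fin n) ℂ) * h.1.eigenvectorUnitary.1 = 1 :=
    Unitary.coe_star_mul_self _
  have hD : diagonal ((↑) ∘ (√·) ∘ h.1.eigenvalues) * diagonal ((↑) ∘ (√·) ∘ h.1.eigenvalues)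
      = diagonal (RCLike.ofReal ∘ h.1.eigenvalues : Fin n → ℂ) := by
    rw [diagonal_mul_diagonal]; congr 1; funext i
    simp only [Function.comp_apply]
    rw [← Complex.ofReal_mul, Real.mul_self_sqrt (h.eigenvalues_nonneg i)]; rfl
  conv_rhs => rw [h.1.spectral_theorem, Unitary.conjStarAlgAut_apply]
  unfold psdSqrt
  calc _ = h.1.eigenvectorUnitary.1 * (diagonal ((↑) ∘ (√·) ∘ h.1.eigenvalues) *
        ((star h.1.eigenvectorUnitary : Matrix (Fin n) (Fin n) ℂ) * h.1.eigenvectorUnitary.1) *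
        diagonal ((↑) ∘ (√·) ∘ h.1.eigenvalues)) *
        (star h.1.eigenvectorUnitary : Matrix (Fin n) (Fin n) ℂ) := by
          simp only [Matrix.mul_assoc]
    _ = _ := by rw [hU, Matrix.mul_one, hD]

lemma psdSqrt_herm {n : ℕ} {M : Matrix (Fin n) (Fin n) ℂ} (h : M.PosSemidef) :
    (psdSqrt h)ᴴ = psdSqrt h := by
  unfold psdSqrt
  rw [conjTranspose_mul, conjTranspose_mul, diagonal_conjTranspose]
  have : star ((↑) ∘ (√·) ∘ h.1.eigenvalues : Fin n → ℂ) = ((↑) ∘ (√·) ∘ h.1.eigenvalues) := by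
    funext i; simp
  rw [this, Matrix.mul_assoc]
  simp [Matrix.star_eq_conjTranspose]

open scoped Classical

lemma enorm2_nonneg' {n : ℕ} (v : Fin n → ℂ) : 0 ≤ enorm2 v := norm_nonneg _

lemma enorm2_add_le {n : ℕ} (v w : Fin n → ℂ) : enorm2 (v + w) ≤ enorm2 v + enorm2 w := by
  have h : (WithLp.equiv 2 (Fin n → ℂ)).symm (v + w)
      = (WithLp.equiv 2 (Fin n → ℂ)).symm v + (WithLp.equiv 2 (Fin n → ℂ)).symm w := rfl
  rw [enorm2, h]
  exact norm_add_le _ _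

lemma enorm2_neg {n : ℕ} (v : Fin n → ℂ) : enorm2 (-v) = enorm2 v := by
  have h : (WithLp.equiv 2 (Fin n → ℂ)).symm (-v)
      = -((WithLp.equiv 2 (Fin n → ℂ)).symm v) := rfl
  rw [enorm2, h, norm_neg]; rfl

lemma enorm2_sum_le {α : Type*} {n : ℕ} (s : Finset α) (f : α → Fin n → ℂ) :
    enorm2 (∑ j ∈ s, f j) ≤ ∑ j ∈ s, enorm2 (f j) := by
  classical
  induction s using Finset.induction with
  | empty => simp [enorm2]
  | insert _ _ h ih =>
      rw [Finset.sum_insert h, Finset.sum_insert h]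
      exact (enorm2_add_le _ _).trans (add_le_add_right ih _)

lemma enorm2_mulVec_le {m n : ℕ} (A : Matrix (Fin m) (Fin n) ℂ) (v : Fin n → ℂ) :
    enorm2 (A.mulVec v) ≤ snorm A * enorm2 v := by
  have h := (LinearMap.toContinuousLinearMap (Matrix.toEuclideanLin A)).le_opNorm
    ((WithLp.equiv 2 (Fin n → ℂ)).symm v)
  simpa [enorm2, snorm, Matrix.toEuclideanLin_apply_piLp_toLp] using h

lemma invSqrt_mul_self_eq {n : ℕ} {M : Matrix (Fin n) (Fin n) ℂ} (hd : M.PosDef) :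
    invSqrt M * M = msqrt M := by
  have h := hd.posSemidef
  rw [invSqrt, msqrt, dif_pos h, dif_pos h]
  have hsq : psdSqrt h * psdSqrt h = M := psdSqrt_mul_self h
  have hunit : IsUnit (psdSqrt h).det := by
    have hdd : (psdSqrt h).det * (psdSqrt h).det = M.det := by rw [← Matrix.det_mul, hsq]
    have hM : IsUnit M.det := hd.det_pos.ne'.isUnit
    rw [← hdd] at hM
    exact isUnit_of_mul_isUnit_left hM
  calc (psdSqrt h)⁻¹ * M = (psdSqrt h)⁻¹ * psdSqrt h * psdSqrt h := by rw [Matrix.mul_assoc, hsq]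
    _ = psdSqrt h := by rw [Matrix.nonsing_inv_mul _ hunit, Matrix.one_mul]

lemma enorm2_mulVec_eq_of_conj {m1 m2 k : ℕ} (S1 : Matrix (Fin m1) (Fin k) ℂ)
    (S2 : Matrix (Fin m2) (Fin k) ℂ) (h : S1ᴴ * S1 = S2ᴴ * S2) (v : Fin k → ℂ) :
    enorm2 (S1.mulVec v) = enorm2 (S2.mulVec v) := by
  have key : ∀ {m : ℕ} (S : Matrix (Fin m) (Fin k) ℂ),
      (∑ i, ‖(S.mulVec v) i‖ ^ 2 : ℝ) = (star v ⬝ᵥ (Sᴴ * S).mulVec v).re := by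
    intro m S
    have h1 : star (S.mulVec v) ⬝ᵥ S.mulVec v = star v ⬝ᵥ (Sᴴ * S).mulVec v := by
      rw [Matrix.star_mulVec, Matrix.dotProduct_mulVec, Matrix.vecMul_vecMul,
        ← Matrix.dotProduct_mulVec]
    rw [← h1]
    simp only [dotProduct, Complex.re_sum, Pi.star_apply]
    congr 1; ext i
    rw [mul_comm, Complex.star_def, Complex.mul_conj]
    simp [Complex.sq_norm]
  rw [enorm2, enorm2, EuclideanSpace.norm_eq, EuclideanSpace.norm_eq]
  congr 1
  calc (∑ i, ‖((WithLp.equiv 2 (Fin m1 → ℂ)).symm (S1.mulVec v)) i‖ ^ 2 : ℝ)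
      = ∑ i, ‖(S1.mulVec v) i‖ ^ 2 := rfl
    _ = ∑ i, ‖(S2.mulVec v) i‖ ^ 2 := by rw [key S1, key S2, h]
    _ = _ := rfl

lemma mulVec_finset_sum {α : Type*} {m k : ℕ} (P : Matrix (Fin m) (Fin k) ℂ)
    (s : Finset α) (f : α → Fin k → ℂ) :
    P.mulVec (∑ j ∈ s, f j) = ∑ j ∈ s, P.mulVec (f j) := by
  classical
  induction s using Finset.induction with
  | empty => simp [Matrix.mulVec_zero]
  | insert _ _ h ih =>
      rw [Finset.sum_insert h, Finset.sum_insert h, Matrix.mulVec_add, ih]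

end AuxLemmas

/-- Proposition 1: recovery guarantee for ZD-GroTh. -/
theorem zdgroth_recovery_guarantee
    {M B : ℕ} {Ni : Fin B → ℕ}
    (A : (i : Fin B) → Matrix (Fin M) (Fin (Ni i)) ℂ)
    (x : (i : Fin B) → Fin (Ni i) → ℂ)
    (n : Fin M → ℂ) (U N : Finset (Fin B))
    (hrank : ∀ i, ((A i)ᴴ * A i).PosDef)
    (hU : U.Nonempty) (hN : N.Nonempty)
    (hcompl : ∀ i, i ∈ N ↔ i ∉ U)
    (μB σmin xmin : ℝ)
    (hμpos : 0 < μB)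
    (hμ : ∀ i j, i ≠ j → snorm (invSqrt ((A i)ᴴ * A i) * ((A i)ᴴ * A j)) ≤ μB)
    (hσ : ∀ i, ∀ v : Fin (Ni i) → ℂ, σmin * enorm2 v ≤ enorm2 ((A i).mulVec v))
    (hxmin_le : ∀ j ∈ U, xmin ≤ enorm2 (x j))
    (hxmin_mem : ∃ j ∈ U, enorm2 (x j) = xmin)
    (hxmin_pos : 0 < xmin)
    (hnorm : ∀ i, snorm (invSqrt ((A i)ᴴ * A i) * (A i)ᴴ) ≤ 1)
    (y : Fin M → ℂ)
    (hy : y = (∑ j ∈ U, (A j).mulVec (x j)) + n)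
    (hcond : (∑ j ∈ U, enorm2 (x j)) / xmin
        < (1 / 2) * (σmin / μB + 1) - enorm2 n / (μB * xmin)) :
    (∃ i ∈ N, ∀ j ∈ U, ncorr (A i) y < ncorr (A j) y) ∧
      (∀ f : Fin B, (∀ k : Fin B, ncorr (A f) y ≤ ncorr (A k) y) → f ∈ N) := by
  classical
  set S := ∑ j ∈ U, enorm2 (x j) with hSdef
  have hxmin_ne : xmin ≠ 0 := hxmin_pos.ne'
  have hμne : μB ≠ 0 := hμpos.ne'
  have hn0 : 0 ≤ enorm2 n := enorm2_nonneg' n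
  obtain ⟨j0, hj0U, _⟩ := hxmin_mem
  have hSx : xmin ≤ S :=
    le_trans (hxmin_le j0 hj0U) (Finset.single_le_sum (fun j _ => enorm2_nonneg' (x j)) hj0U)
  -- key inequality: 2 μB S + 2 ‖n‖ < (σmin + μB) xmin
  have key : 2 * (μB * S) + 2 * enorm2 n < (σmin + μB) * xmin := by
    have h1 := mul_lt_mul_of_pos_right hcond (mul_pos hμpos hxmin_pos)
    have e1 : S / xmin * (μB * xmin) = μB * S := by field_simp
    have e2 : ((1 / 2) * (σmin / μB + 1) - enorm2 n / (μB * xmin)) * (μB * xmin)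
        = (1 / 2) * (σmin + μB) * xmin - enorm2 n := by field_simp
    rw [e1, e2] at h1
    linarith
  have hσμ : μB < σmin := by
    nlinarith [mul_le_mul_of_nonneg_left hSx hμpos.le]
  -- upper bound for unused blocks
  have upper : ∀ i ∈ N, ncorr (A i) y ≤ μB * S + enorm2 n := by
    intro i hi
    set P := invSqrt ((A i)ᴴ * A i) * (A i)ᴴ with hP
    have hdecomp : P.mulVec y
        = (∑ j ∈ U, (invSqrt ((A i)ᴴ * A i) * ((A i)ᴴ * A j)).mulVec (x j)) + P.mulVec n := by
      rw [hy, Matrix.mulVec_add, mulVec_finset_sum]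
      congr 1
      refine Finset.sum_congr rfl fun j _ => ?_
      rw [Matrix.mulVec_mulVec, hP, Matrix.mul_assoc]
    have hni : ncorr (A i) y = enorm2 (P.mulVec y) := rfl
    rw [hni, hdecomp]
    refine (enorm2_add_le _ _).trans ?_
    have hsum : enorm2 (∑ j ∈ U, (invSqrt ((A i)ᴴ * A i) * ((A i)ᴴ * A j)).mulVec (x j))
        ≤ μB * S := by
      refine (enorm2_sum_le _ _).trans ?_
      rw [hSdef, Finset.mul_sum]
      refine Finset.sum_le_sum fun j hj => ?_
      have hij : i ≠ j := by
        intro h; subst h; exact ((hcompl i).mp hi) hj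
      exact (enorm2_mulVec_le _ _).trans
        (mul_le_mul_of_nonneg_right (hμ i j hij) (enorm2_nonneg' _))
    have hnoise : enorm2 (P.mulVec n) ≤ enorm2 n := by
      refine (enorm2_mulVec_le _ _).trans ?_
      calc snorm P * enorm2 n ≤ 1 * enorm2 n :=
            mul_le_mul_of_nonneg_right (hnorm i) hn0
        _ = enorm2 n := one_mul _
    exact add_le_add hsum hnoise
  -- lower bound for used blocks
  have lower : ∀ j ∈ U,
      σmin * enorm2 (x j) - (μB * (S - enorm2 (x j)) + enorm2 n) ≤ ncorr (A j) y := by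
    intro j hj
    set P := invSqrt ((A j)ᴴ * A j) * (A j)ᴴ with hP
    have hps := (hrank j).posSemidef
    -- the main term
    set main : Fin (Ni j) → ℂ := (msqrt ((A j)ᴴ * A j)).mulVec (x j) with hmain
    set r : Fin (Ni j) → ℂ :=
      (∑ k ∈ U.erase j, (invSqrt ((A j)ᴴ * A j) * ((A j)ᴴ * A k)).mulVec (x k)) + P.mulVec n
      with hr
    have hdecomp : P.mulVec y = main + r := by
      rw [hy, Matrix.mulVec_add, mulVec_finset_sum, hr, hmain, ← add_assoc]
      congr 1
      have hsplit : (∑ k ∈ U, P.mulVec ((A k).mulVec (x k)))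
          = P.mulVec ((A j).mulVec (x j))
            + ∑ k ∈ U.erase j, P.mulVec ((A k).mulVec (x k)) :=
        (Finset.add_sum_erase U _ hj).symm
      rw [hsplit]
      congr 1
      · rw [Matrix.mulVec_mulVec, hP, Matrix.mul_assoc, invSqrt_mul_self_eq (hrank j)]
      · refine Finset.sum_congr rfl fun k _ => ?_
        rw [Matrix.mulVec_mulVec, hP, Matrix.mul_assoc]
    -- enorm2 main = enorm2 (A j *ᵥ x j) ≥ σmin ‖x j‖
    have hsym : (msqrt ((A j)ᴴ * A j))ᴴ = msqrt ((A j)ᴴ * A j) := by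
      rw [msqrt, dif_pos hps]; exact psdSqrt_herm hps
    have hmm : msqrt ((A j)ᴴ * A j) * msqrt ((A j)ᴴ * A j) = (A j)ᴴ * A j := by
      rw [msqrt, dif_pos hps]; exact psdSqrt_mul_self hps
    have hmaineq : enorm2 main = enorm2 ((A j).mulVec (x j)) := by
      rw [hmain]
      refine enorm2_mulVec_eq_of_conj _ _ ?_ _
      rw [hsym, hmm]
    have hmainlb : σmin * enorm2 (x j) ≤ enorm2 main := by
      rw [hmaineq]; exact hσ j (x j)
    -- bound on the remainder
    have hrb : enorm2 r ≤ μB * (S - enorm2 (x j)) + enorm2 n := by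
      rw [hr]
      refine (enorm2_add_le _ _).trans (add_le_add ?_ ?_)
      · refine (enorm2_sum_le _ _).trans ?_
        have hE : ∑ k ∈ U.erase j, enorm2 (x k) = S - enorm2 (x j) := by
          rw [hSdef]; exact Finset.sum_erase_eq_sub hj
        rw [← hE, Finset.mul_sum]
        refine Finset.sum_le_sum fun k hk => ?_
        have hjk : j ≠ k := fun h => (Finset.mem_erase.mp hk).1 h.symm
        exact (enorm2_mulVec_le _ _).trans
          (mul_le_mul_of_nonneg_right (hμ j k hjk) (enorm2_nonneg' _))
      · refine (enorm2_mulVec_le _ _).trans ?_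
        calc snorm P * enorm2 n ≤ 1 * enorm2 n :=
              mul_le_mul_of_nonneg_right (hnorm j) hn0
          _ = enorm2 n := one_mul _
    -- combine: ‖main‖ ≤ ‖main + r‖ + ‖r‖
    have htri : enorm2 main ≤ enorm2 (P.mulVec y) + enorm2 r := by
      have : main = (P.mulVec y) + (-r) := by rw [hdecomp]; ring_nf
      calc enorm2 main = enorm2 ((P.mulVec y) + (-r)) := by rw [← this]
        _ ≤ enorm2 (P.mulVec y) + enorm2 (-r) := enorm2_add_le _ _
        _ = enorm2 (P.mulVec y) + enorm2 r := by rw [enorm2_neg]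
    have hnj : ncorr (A j) y = enorm2 (P.mulVec y) := rfl
    rw [hnj]
    linarith
  -- the strict comparison
  have main : ∀ i ∈ N, ∀ j ∈ U, ncorr (A i) y < ncorr (A j) y := by
    intro i hi j hj
    have hxj : xmin ≤ enorm2 (x j) := hxmin_le j hj
    have hpos : (0:ℝ) ≤ σmin + μB := by linarith
    have hmul : (σmin + μB) * xmin ≤ (σmin + μB) * enorm2 (x j) :=
      mul_le_mul_of_nonneg_left hxj hpos
    have hstrict : μB * S + enorm2 n
        < σmin * enorm2 (x j) - (μB * (S - enorm2 (x j)) + enorm2 n) := by nlinarith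
    exact lt_of_le_of_lt (upper i hi) (lt_of_lt_of_le hstrict (lower j hj))
  constructor
  · obtain ⟨i, hi⟩ := hN
    exact ⟨i, hi, fun j hj => main i hi j hj⟩
  · intro f hf
    by_contra hfN
    have hfU : f ∈ U := by
      by_contra h
      exact hfN ((hcompl f).mpr h)
    obtain ⟨i, hi⟩ := hN
    exact absurd (hf i) (not_le.mpr (main i hi f hfU))
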